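/- Let p ∈ [2,∞] be fixed and assume the real-valued random field (X_t)_{t∈ℕ^d} (with X_t ∈ L^p) satisfies assumption WD(p) with constant M_p and function φ_p. Then for any finite product set A = ∏_{i=1}^d A_i ⊂ ℕ^d, the compressed field (X̃^{(A)}_t)_{t∈ℕ^d} satisfies assumption WD(p) with the same constant M_p and the same function φ_p. -/

import Mathlib

open MeasureTheory Finset
open scoped ENNReal

noncomputable section

/-- The σ-algebra `𝓜_{t,r}` generated by `{X_u : sup_i (t_i - u_i) ≥ r}`, for a field
indexed by `ℕ^d`. -/
def sigMN {Ω : Type*} {d : ℕ} (X : (Fin d → ℕ) → Ω → ℝ) (t : Fin d → ℕ) (r : ℕ) :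
    MeasurableSpace Ω :=
  ⨆ u ∈ {u : Fin d → ℕ | ∃ i, u i + r ≤ t i},
    MeasurableSpace.comap (X u) Real.measurableSpace

/-- `(j : B)`: the `(j+1)`-th element of the finite set `B ⊂ ℕ` in increasing order. -/
def nthElt (B : Finset ℕ) (j : ℕ) : ℕ :=
  (B.sort (· ≤ ·)).getD j 0

/-- The "compressed" field `X̃^{(A)}`, for a product set `A = ∏_i A_i`:
`X̃^{(A)}_t = X_{(t:A)}` if `t ∈ K(A) = ∏_i {0,…,|A_i|−1}`, and `0` otherwise. -/
def compress {Ω : Type*} {d : ℕ} (X : (Fin d → ℕ) → Ω → ℝ) (A : Fin d → Finset ℕ) :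
    (Fin d → ℕ) → Ω → ℝ :=
  fun t => if ∀ i, t i < (A i).card then X (fun i => nthElt (A i) (t i)) else 0



section TangentLemmas

/-- Bernoulli-type tangent line inequality for `rpow` on nonnegative reals. -/
lemma rpow_tangent_nonneg {pr q y : ℝ} (hpr : 1 ≤ pr) (hq : 0 < q) (hy : 0 ≤ y) :
    q ^ pr + pr * q ^ (pr - 1) * (y - q) ≤ y ^ pr := by
  have hs : (-1 : ℝ) ≤ y / q - 1 := by
    have : 0 ≤ y / q := div_nonneg hy hq.le
    linarith
  have hb := one_add_mul_self_le_rpow_one_add hs hpr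
  have h1 : (1 + (y / q - 1)) = y / q := by ring
  rw [h1] at hb
  have hqp : 0 < q ^ pr := Real.rpow_pos_of_pos hq _
  have h2 : (y / q) ^ pr = y ^ pr / q ^ pr := Real.div_rpow hy hq.le pr
  have h3 : q ^ pr * (1 + pr * (y / q - 1)) ≤ y ^ pr := by
    calc q ^ pr * (1 + pr * (y / q - 1)) ≤ q ^ pr * ((y / q) ^ pr) :=
          mul_le_mul_of_nonneg_left hb hqp.le
    _ = y ^ pr := by rw [h2]; field_simp
  have h4 : q ^ (pr - 1) = q ^ pr / q := by
    rw [Real.rpow_sub hq, Real.rpow_one]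
  calc q ^ pr + pr * q ^ (pr - 1) * (y - q)
      = q ^ pr * (1 + pr * (y / q - 1)) := by rw [h4]; field_simp
  _ ≤ y ^ pr := h3

/-- Tangent line inequality for `x ↦ |x| ^ pr` at the point `q`. -/
lemma tangent_le {pr : ℝ} (hpr : 1 ≤ pr) (q x : ℝ) :
    |q| ^ pr + pr * Real.sign q * |q| ^ (pr - 1) * (x - q) ≤ |x| ^ pr := by
  rcases lt_trichotomy q 0 with hq | hq | hq
  · rw [Real.sign_of_neg hq]
    have h := rpow_tangent_nonneg hpr (abs_pos.2 hq.ne) (abs_nonneg x)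
    have hco : (0 : ℝ) ≤ pr * |q| ^ (pr - 1) := by positivity
    have habs : |q| = -q := abs_of_neg hq
    have h5 : q - x ≤ |x| - |q| := by
      have := neg_le_abs x; rw [habs]; linarith
    nlinarith [mul_le_mul_of_nonneg_left h5 hco]
  · subst hq
    have h0 : |(0 : ℝ)| ^ pr = 0 := by
      rw [abs_zero, Real.zero_rpow (by linarith)]
    rw [Real.sign_zero, h0]
    have := Real.rpow_nonneg (abs_nonneg x) pr
    simpa using this
  · rw [Real.sign_of_pos hq]
    have h := rpow_tangent_nonneg hpr (abs_pos.2 hq.ne') (abs_nonneg x)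
    have hco : (0 : ℝ) ≤ pr * |q| ^ (pr - 1) := by positivity
    have h5 : x - q ≤ |x| - |q| := by
      have := le_abs_self x; rw [abs_of_pos hq]; linarith
    nlinarith [mul_le_mul_of_nonneg_left h5 hco]

lemma exists_rat_seq_tendsto (x : ℝ) :
    ∃ q : ℕ → ℚ, Filter.Tendsto (fun n => (q n : ℝ)) Filter.atTop (nhds x) := by
  have h : ∀ n : ℕ, ∃ q : ℚ, x - 1 / (n + 1) < (q : ℝ) ∧ (q : ℝ) < x := fun n =>
    exists_rat_btwn (by
      have : (0 : ℝ) < 1 / (n + 1) := by positivity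
      linarith)
  choose q hq1 hq2 using h
  refine ⟨q, ?_⟩
  have hlow : Filter.Tendsto (fun n : ℕ => x - 1 / ((n : ℝ) + 1)) Filter.atTop (nhds x) := by
    have := tendsto_const_nhds (x := x) (f := Filter.atTop (α := ℕ)) |>.sub
      tendsto_one_div_add_atTop_nhds_zero_nat
    simpa using this
  exact tendsto_of_tendsto_of_tendsto_of_le_of_le hlow tendsto_const_nhds
    (fun n => (hq1 n).le) (fun n => (hq2 n).le)

lemma abs_real_sign_le_one (y : ℝ) : |Real.sign y| ≤ 1 := by
  rcases lt_trichotomy y 0 with h | h | h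
  · rw [Real.sign_of_neg h]; norm_num
  · subst h; rw [Real.sign_zero]; norm_num
  · rw [Real.sign_of_pos h]; norm_num

lemma abs_rpow_le_of_forall_tangent {pr c x : ℝ} (hpr : 1 ≤ pr)
    (h : ∀ q : ℚ, |(q : ℝ)| ^ pr + pr * Real.sign (q : ℝ) * |(q : ℝ)| ^ (pr - 1) * (x - q) ≤ c) :
    |x| ^ pr ≤ c := by
  obtain ⟨q, hq⟩ := exists_rat_seq_tendsto x
  have h1 : Filter.Tendsto (fun n => |(q n : ℝ)| ^ pr) Filter.atTop (nhds (|x| ^ pr)) :=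
    (hq.abs).rpow_const (Or.inr (by linarith))
  have hsub : Filter.Tendsto (fun n => |x - (q n : ℝ)|) Filter.atTop (nhds 0) := by
    have := (tendsto_const_nhds (x := x) (f := Filter.atTop (α := ℕ))).sub hq
    simpa using this.abs
  have h2 : Filter.Tendsto
      (fun n => pr * Real.sign ((q n : ℝ)) * |(q n : ℝ)| ^ (pr - 1) * (x - q n))
      Filter.atTop (nhds 0) := by
    rw [tendsto_zero_iff_norm_tendsto_zero]
    apply squeeze_zero (g := fun n => pr * |(q n : ℝ)| ^ (pr - 1) * |x - (q n : ℝ)|)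
      (fun n => norm_nonneg _)
    · intro n
      rw [Real.norm_eq_abs, abs_mul, abs_mul, abs_mul]
      have hs := abs_real_sign_le_one ((q n : ℝ))
      have h1' : |pr| = pr := abs_of_nonneg (by linarith)
      have h2' : |(|(q n : ℝ)| ^ (pr - 1))| = |(q n : ℝ)| ^ (pr - 1) :=
        abs_of_nonneg (Real.rpow_nonneg (abs_nonneg _) _)
      rw [h1', h2']
      have hb : pr * |Real.sign ((q n : ℝ))| ≤ pr * 1 :=
        mul_le_mul_of_nonneg_left hs (by linarith)
      have : pr * |Real.sign ((q n : ℝ))| * |(q n : ℝ)| ^ (pr - 1)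
          ≤ pr * |(q n : ℝ)| ^ (pr - 1) := by nlinarith [Real.rpow_nonneg (abs_nonneg ((q n : ℝ))) (pr - 1)]
      exact mul_le_mul_of_nonneg_right this (abs_nonneg _) |>.trans
        (le_of_eq rfl)
    · have hlim : Filter.Tendsto (fun n => pr * |(q n : ℝ)| ^ (pr - 1) * |x - (q n : ℝ)|)
          Filter.atTop (nhds (pr * |x| ^ (pr - 1) * 0)) :=
        ((tendsto_const_nhds.mul ((hq.abs).rpow_const (Or.inr (by linarith)))).mul hsub)
      simpa using hlim
  have hfin := h1.add h2
  rw [add_zero] at hfin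
  exact le_of_tendsto hfin (Filter.Eventually.of_forall fun n => h (q n))

end TangentLemmas

section CondexpLemmas

variable {Ω : Type*} {m0 : MeasurableSpace Ω} {μ : Measure Ω} [IsProbabilityMeasure μ]
  {m : MeasurableSpace Ω}

/-- `|E[f|m]| ≤ E[|f| | m]` almost everywhere. -/
lemma abs_condexp_le_ae {f : Ω → ℝ} (hf : Integrable f μ) :
    ∀ᵐ ω ∂μ, |(μ[f|m]) ω| ≤ (μ[(fun ω => |f ω|) | m]) ω := by
  have h1 : μ[f|m] ≤ᵐ[μ] μ[(fun ω => |f ω|) | m] :=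
    condExp_mono hf hf.abs (Filter.Eventually.of_forall fun ω => le_abs_self _)
  have h2 : μ[-f|m] ≤ᵐ[μ] μ[(fun ω => |f ω|) | m] :=
    condExp_mono hf.neg hf.abs (Filter.Eventually.of_forall fun ω => neg_le_abs _)
  have h3 := condExp_neg (μ := μ) (m := m) f
  filter_upwards [h1, h2, h3] with ω h1ω h2ω h3ω
  rw [h3ω] at h2ω
  simp only [Pi.neg_apply] at h2ω
  exact abs_le.mpr ⟨by linarith, h1ω⟩

/-- Conditional Jensen inequality for `x ↦ |x| ^ pr`. -/
lemma condexp_abs_rpow_le (hm : m ≤ m0) {f : Ω → ℝ} {pr : ℝ} (hpr : 1 ≤ pr)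
    (hf : Integrable f μ) (hg : Integrable (fun ω => |f ω| ^ pr) μ) :
    ∀ᵐ ω ∂μ, |(μ[f|m]) ω| ^ pr ≤ (μ[fun ω => |f ω| ^ pr|m]) ω := by
  set g := fun ω => |f ω| ^ pr with hgdef
  have key : ∀ q : ℚ, ∀ᵐ ω ∂μ,
      |(q : ℝ)| ^ pr + pr * Real.sign (q : ℝ) * |(q : ℝ)| ^ (pr - 1) * ((μ[f|m]) ω - q)
        ≤ (μ[g|m]) ω := by
    intro q
    set d := pr * Real.sign ((q : ℝ)) * |(q : ℝ)| ^ (pr - 1) with hd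
    set cst := |(q : ℝ)| ^ pr - d * q with hcst
    have hint : Integrable ((fun _ : Ω => cst) + d • f) μ := (integrable_const cst).add (hf.smul d)
    have h1 : μ[(fun _ : Ω => cst) + d • f|m] =ᵐ[μ] fun ω => cst + d * (μ[f|m]) ω := by
      refine (condExp_add (integrable_const cst) (hf.smul d) (m := m)).trans ?_
      have h2 := condExp_smul (μ := μ) (m := m) d f
      rw [condExp_const hm cst]
      filter_upwards [h2] with ω h2ω
      simp only [Pi.add_apply, Pi.smul_apply, smul_eq_mul] at h2ω ⊢
      rw [h2ω]
    have h3 : μ[(fun _ : Ω => cst) + d • f|m] ≤ᵐ[μ] μ[g|m] := by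
      refine condExp_mono hint hg (Filter.Eventually.of_forall fun ω => ?_)
      have ht := tangent_le hpr ((q : ℝ)) (f ω)
      simp only [Pi.add_apply, Pi.smul_apply, smul_eq_mul]
      calc cst + d * f ω = |(q : ℝ)| ^ pr + d * (f ω - q) := by rw [hcst]; ring
      _ ≤ |f ω| ^ pr := by rw [hd]; exact ht
    filter_upwards [h1, h3] with ω h1ω h3ω
    rw [h1ω] at h3ω
    calc |(q : ℝ)| ^ pr + d * ((μ[f|m]) ω - q) = cst + d * (μ[f|m]) ω := by rw [hcst]; ring
    _ ≤ (μ[g|m]) ω := h3ω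
  filter_upwards [ae_all_iff.mpr key] with ω hω
  exact abs_rpow_le_of_forall_tangent hpr hω

/-- Conditional expectation is an `Lᵖ`-contraction, `1 ≤ p ≤ ∞`. -/
lemma eLpNorm_condexp_le_of_memℒp (hm : m ≤ m0) {p : ℝ≥0∞} (hp : 1 ≤ p) {f : Ω → ℝ}
    (hf : MemLp f p μ) : eLpNorm (μ[f|m]) p μ ≤ eLpNorm f p μ := by
  have hfint : Integrable f μ := hf.integrable hp
  by_cases hptop : p = ∞
  · subst hptop
    rw [eLpNorm_exponent_top, eLpNorm_exponent_top]
    set C := eLpNormEssSup f μ with hC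
    by_cases hCtop : C = ∞
    · rw [hCtop]; exact le_top
    · have hfb : ∀ᵐ ω ∂μ, ‖f ω‖ ≤ C.toReal := by
        filter_upwards [ae_le_eLpNormEssSup (f := f) (μ := μ)] with ω hω
        have := ENNReal.toReal_mono hCtop hω
        simpa [coe_nnnorm] using this
      have habs := abs_condexp_le_ae (μ := μ) (m := m) hfint
      have hmono : μ[(fun ω => |f ω|) | m] ≤ᵐ[μ] μ[fun _ : Ω => C.toReal|m] :=
        condExp_mono hfint.abs (integrable_const _)
          (by filter_upwards [hfb] with ω hω; simpa [Real.norm_eq_abs] using hω)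
      rw [condExp_const hm] at hmono
      have hbound : ∀ᵐ ω ∂μ, ‖(μ[f|m]) ω‖ ≤ C.toReal := by
        filter_upwards [habs, hmono] with ω h1 h2
        rw [Real.norm_eq_abs]
        exact h1.trans h2
      calc eLpNormEssSup (μ[f|m]) μ ≤ ENNReal.ofReal C.toReal :=
            eLpNormEssSup_le_of_ae_bound hbound
      _ = C := ENNReal.ofReal_toReal hCtop
  · have hp0 : p ≠ 0 := by
      intro h; rw [h] at hp; exact absurd hp (by simp)
    set pr := p.toReal with hpr_def
    have hpr : 1 ≤ pr := by
      have := ENNReal.toReal_mono hptop hp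
      simpa using this
    have hgint : Integrable (fun ω => |f ω| ^ pr) μ := by
      simpa [Real.norm_eq_abs] using hf.integrable_norm_rpow hp0 hptop
    have hgnn : 0 ≤ᵐ[μ] fun ω => |f ω| ^ pr :=
      Filter.Eventually.of_forall fun ω => Real.rpow_nonneg (abs_nonneg _) _
    have hjen := condexp_abs_rpow_le hm hpr hfint hgint
    rw [eLpNorm_eq_lintegral_rpow_enorm_toReal hp0 hptop, eLpNorm_eq_lintegral_rpow_enorm_toReal hp0 hptop]
    apply ENNReal.rpow_le_rpow _ (by positivity)
    have hofr : ∀ x : ℝ, (‖x‖₊ : ℝ≥0∞) ^ pr = ENNReal.ofReal (|x| ^ pr) := by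
      intro x
      rw [← ENNReal.ofReal_rpow_of_nonneg (abs_nonneg x) (by linarith)]
      congr 1
      rw [← Real.norm_eq_abs]; exact (ofReal_norm x).symm
    calc ∫⁻ ω, (‖(μ[f|m]) ω‖₊ : ℝ≥0∞) ^ pr ∂μ
        = ∫⁻ ω, ENNReal.ofReal (|(μ[f|m]) ω| ^ pr) ∂μ := by
          exact lintegral_congr fun ω => hofr _
    _ ≤ ∫⁻ ω, ENNReal.ofReal ((μ[fun ω => |f ω| ^ pr|m]) ω) ∂μ :=
          lintegral_mono_ae (hjen.mono fun ω h => ENNReal.ofReal_le_ofReal h)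
    _ = ENNReal.ofReal (∫ ω, (μ[fun ω => |f ω| ^ pr|m]) ω ∂μ) :=
          (ofReal_integral_eq_lintegral_ofReal integrable_condExp
            (condExp_nonneg hgnn)).symm
    _ = ENNReal.ofReal (∫ ω, |f ω| ^ pr ∂μ) := by rw [integral_condExp hm]
    _ = ∫⁻ ω, ENNReal.ofReal (|f ω| ^ pr) ∂μ :=
          ofReal_integral_eq_lintegral_ofReal hgint hgnn
    _ = ∫⁻ ω, (‖f ω‖₊ : ℝ≥0∞) ^ pr ∂μ := (lintegral_congr fun ω => hofr _).symm

end CondexpLemmas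

lemma nthElt_lt_nthElt {B : Finset ℕ} {j k : ℕ} (hjk : j < k) (hk : k < B.card) :
    nthElt B j < nthElt B k := by
  have hlen : (B.sort (· ≤ ·)).length = B.card := Finset.length_sort _
  have hj : j < (B.sort (· ≤ ·)).length := by omega
  have hk' : k < (B.sort (· ≤ ·)).length := by omega
  rw [nthElt, nthElt, List.getD_eq_getElem _ _ hj, List.getD_eq_getElem _ _ hk']
  have h1 := List.pairwise_iff_getElem.mp (B.pairwise_sort (· ≤ ·)) j k hj hk' hjk
  have h2 : (B.sort (· ≤ ·))[j] ≠ (B.sort (· ≤ ·))[k] := fun h => by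
    have := (List.Nodup.getElem_inj_iff (B.sort_nodup (· ≤ ·))).mp h; omega
  exact lt_of_le_of_ne h1 h2

lemma nthElt_add_le {B : Finset ℕ} : ∀ (r j k : ℕ), j + r ≤ k → k < B.card →
    nthElt B j + r ≤ nthElt B k
  | 0, j, k, h, hk => by
    rcases eq_or_lt_of_le (show j ≤ k by omega) with he | hl
    · subst he; omega
    · have := nthElt_lt_nthElt hl hk; omega
  | (r + 1), j, k, h, hk => by
    have hk1 : k - 1 < B.card := by omega
    have h1 := nthElt_add_le r j (k - 1) (by omega) hk1
    have h2 : nthElt B (k - 1) < nthElt B k := nthElt_lt_nthElt (by omega) hk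
    omega

/-- Lemma: if `(X_t)_{t ∈ ℕ^d}` satisfies `WD(p)` with constant `M` and function `φ`, then
for any finite product set `A = ∏_i A_i` the compressed field `X̃^{(A)}` satisfies `WD(p)`
with the same constant and function. -/
theorem compress_weak_dependence
    {Ω : Type*} [MeasurableSpace Ω] (μ : Measure Ω) [IsProbabilityMeasure μ]
    (d : ℕ) (p : ℝ≥0∞) (hp : 2 ≤ p)
    (X : (Fin d → ℕ) → Ω → ℝ)
    (hXmeas : ∀ t, Measurable (X t))
    (hXLp : ∀ t, MemLp (X t) p μ)
    (M : ℝ) (φ : ℕ → ℝ) (hφanti : Antitone φ) (hφ0 : φ 0 = 1)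
    (hWD : ∀ (t : Fin d → ℕ) (r : ℕ), 0 < r →
      eLpNorm (μ[X t | sigMN X t r] - fun _ => ∫ ω, X t ω ∂μ) p μ
        ≤ ENNReal.ofReal (M * φ r))
    (A : Fin d → Finset ℕ) :
    ∀ (t : Fin d → ℕ) (r : ℕ), 0 < r →
      eLpNorm (μ[compress X A t | sigMN (compress X A) t r]
          - fun _ => ∫ ω, compress X A t ω ∂μ) p μ
        ≤ ENNReal.ofReal (M * φ r) := by

  intro t r hr
  by_cases hK : ∀ i, t i < (A i).card
  · set s : Fin d → ℕ := fun i => nthElt (A i) (t i) with hs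
    have hct : compress X A t = X s := by simp only [compress]; rw [if_pos hK]
    rw [hct]
    have hmX : sigMN X s r ≤ ‹MeasurableSpace Ω› :=
      iSup₂_le fun u _ => measurable_iff_comap_le.mp (hXmeas u)
    have hle : sigMN (compress X A) t r ≤ sigMN X s r := by
      refine iSup₂_le fun u hu => ?_
      obtain ⟨i, hi⟩ := hu
      by_cases hu2 : ∀ i, u i < (A i).card
      · have hcu : compress X A u = X (fun i => nthElt (A i) (u i)) := by
          simp only [compress]; rw [if_pos hu2]
        rw [hcu]
        have hv : ∃ i, (fun i => nthElt (A i) (u i)) i + r ≤ s i :=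
          ⟨i, nthElt_add_le r (u i) (t i) hi (hK i)⟩
        exact le_iSup₂_of_le (fun i => nthElt (A i) (u i)) hv le_rfl
      · have hcu : compress X A u = 0 := by simp only [compress]; rw [if_neg hu2]
        rw [hcu]
        have hmeas : @Measurable Ω ℝ (sigMN X s r) Real.measurableSpace (0 : Ω → ℝ) :=
          @measurable_const ℝ Ω Real.measurableSpace (sigMN X s r) 0
        exact measurable_iff_comap_le.mp hmeas
    have hmc : sigMN (compress X A) t r ≤ ‹MeasurableSpace Ω› := hle.trans hmX
    set c := ∫ ω, X s ω ∂μ with hc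
    have hXs_int : Integrable (X s) μ := (hXLp s).integrable (le_trans (by norm_num) hp)
    set g := μ[X s | sigMN X s r] with hg
    have hfLp : MemLp (g - fun _ => c) p μ := by
      constructor
      · exact ((stronglyMeasurable_condExp.mono hmX).aestronglyMeasurable).sub
          aestronglyMeasurable_const
      · exact lt_of_le_of_lt (hWD s r hr) ENNReal.ofReal_lt_top
    have hid : (μ[X s | sigMN (compress X A) t r] - fun _ => c)
        =ᵐ[μ] μ[(g - fun _ => c) | sigMN (compress X A) t r] := by
      have e1 := condExp_sub (μ := μ) (m := sigMN (compress X A) t r)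
        (f := μ[X s | sigMN X s r]) (g := fun _ => c)
        integrable_condExp (integrable_const c)
      have e2 := condExp_condExp_of_le (μ := μ) (f := X s) hle hmX
      rw [condExp_const hmc c] at e1
      filter_upwards [e1, e2] with ω h1 h2
      simp only [Pi.sub_apply] at h1 h2 ⊢
      rw [h1, h2]
    rw [eLpNorm_congr_ae hid]
    calc eLpNorm (μ[(g - fun _ => c) | sigMN (compress X A) t r]) p μ
        ≤ eLpNorm (g - fun _ => c) p μ :=
          eLpNorm_condexp_le_of_memℒp hmc (le_trans (by norm_num) hp) hfLp
    _ ≤ ENNReal.ofReal (M * φ r) := hWD s r hr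
  · have hct : compress X A t = 0 := by simp only [compress]; rw [if_neg hK]
    rw [hct]
    have hz : (μ[(0 : Ω → ℝ) | sigMN (compress X A) t r]
        - fun _ => ∫ ω, (0 : Ω → ℝ) ω ∂μ) = 0 := by
      rw [condExp_zero]; funext ω; simp
    rw [hz, eLpNorm_zero]
    exact zero_le
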